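/- Let q ≥ 2 and n = e^{−V} on [m,∞), where |V(x)| ≤ C for x ∈ [m, m+K], V is C¹ on [m+K,∞) with V'(x) ≥ δ > 0 there, and V(x) ≥ −C for all x ≥ m. Then for every x ≥ m: (q−1)·n(x)^{−1/(q−1)} ≥ ε·∫_m^x n(u)^{−1/(q−1)} du, with ε = 1/(1/δ + (K/(q−1))·e^{2C/(q−1)}). -/

import Mathlib

open Real Set MeasureTheory intervalIntegral

/-- For `q ≥ 2` and `n = e^{−V}` on `[m,∞)` with `|V| ≤ C` on `[m,m+K]`,
`V` C¹ on `[m+K,∞)` with `V' ≥ δ > 0` there, and `V ≥ −C` on `[m,∞)`, one has for `x ≥ m`: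
`(q−1)·n(x)^{−1/(q−1)} ≥ ε·∫_m^x n(u)^{−1/(q−1)} du` with
`ε = 1/(1/δ + (K/(q−1))·e^{2C/(q−1)})`. -/
theorem stmt14 (q m K C δ : ℝ) (hq : 2 ≤ q) (hK : 0 < K) (hδ : 0 < δ)
    (V V' : ℝ → ℝ) (hVmeas : Measurable V)
    (hbd : ∀ x ∈ Set.Icc m (m + K), |V x| ≤ C)
    (hder : ∀ x ∈ Set.Ici (m + K), HasDerivAt V (V' x) x)
    (hcont : ContinuousOn V' (Set.Ici (m + K)))
    (hV' : ∀ x ∈ Set.Ici (m + K), δ ≤ V' x)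
    (hlow : ∀ x ∈ Set.Ici m, -C ≤ V x) :
    ∀ x ≥ m,
      (1 / (1 / δ + (K / (q - 1)) * Real.exp (2 * C / (q - 1)))) *
          (∫ u in m..x, Real.exp (-V u) ^ (-(1 / (q - 1))))
        ≤ (q - 1) * Real.exp (-V x) ^ (-(1 / (q - 1))) := by
  intro x hx
  have hq1 : (0:ℝ) < q - 1 := by linarith
  set β : ℝ := 1 / (q - 1) with hβdef
  have hβ : 0 < β := by positivity
  set F : ℝ → ℝ := fun u => Real.exp (β * V u) with hF
  have hFeq : ∀ u : ℝ, Real.exp (-V u) ^ (-(1 / (q - 1))) = F u := by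
    intro u
    rw [Real.rpow_def_of_pos (Real.exp_pos _), Real.log_exp]
    simp only [hF, hβdef]
    congr 1
    ring
  have hFpos : ∀ u, 0 < F u := fun u => Real.exp_pos _
  have hC0 : 0 ≤ C := by
    have := hbd m ⟨le_refl m, by linarith⟩
    exact le_trans (abs_nonneg _) this
  have hFmeas : Measurable F := (hVmeas.const_mul β).exp
  -- integrability on pieces inside [m, m+K]
  have hint1 : ∀ b, m ≤ b → b ≤ m + K → IntervalIntegrable F volume m b := by
    intro b h1 h2
    rw [intervalIntegrable_iff_integrableOn_Ioc_of_le h1]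
    have hc : IntegrableOn (fun _ : ℝ => Real.exp (β * C)) (Set.Ioc m b) volume :=
      integrableOn_const measure_Ioc_lt_top.ne
    refine hc.mono' (hFmeas.aestronglyMeasurable.restrict) ?_
    filter_upwards [self_mem_ae_restrict measurableSet_Ioc] with u hu
    have hmem : u ∈ Set.Icc m (m + K) := ⟨hu.1.le, le_trans hu.2 h2⟩
    have hVu : V u ≤ C := le_trans (le_abs_self _) (hbd u hmem)
    have : F u ≤ Real.exp (β * C) :=
      Real.exp_le_exp.mpr (mul_le_mul_of_nonneg_left hVu hβ.le)
    rw [Real.norm_eq_abs, abs_of_pos (hFpos u)]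
    exact this
  -- bound on pieces inside [m, m+K]
  have hbound1 : ∀ b, m ≤ b → b ≤ m + K →
      (∫ u in m..b, F u) ≤ K * Real.exp (β * C) := by
    intro b h1 h2
    have h3 : (∫ u in m..b, F u) ≤ ∫ _ in m..b, Real.exp (β * C) := by
      apply intervalIntegral.integral_mono_on h1 (hint1 b h1 h2) intervalIntegrable_const
      intro u hu
      have hmem : u ∈ Set.Icc m (m + K) := ⟨hu.1, le_trans hu.2 h2⟩
      have hVu : V u ≤ C := le_trans (le_abs_self _) (hbd u hmem)
      exact Real.exp_le_exp.mpr (mul_le_mul_of_nonneg_left hVu hβ.le)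
    rw [intervalIntegral.integral_const, smul_eq_mul] at h3
    have : (b - m) * Real.exp (β * C) ≤ K * Real.exp (β * C) := by
      apply mul_le_mul_of_nonneg_right (by linarith) (Real.exp_pos _).le
    linarith
  -- F x ≥ exp(-β C)
  have hFxlow : Real.exp (-(β * C)) ≤ F x := by
    apply Real.exp_le_exp.mpr
    have := hlow x hx
    nlinarith [hβ]
  -- exp identity for the 2C term
  have hE : Real.exp (2 * C / (q - 1)) = Real.exp (β * C) * Real.exp (β * C) := by
    rw [← Real.exp_add]
    congr 1
    rw [hβdef]
    ring
  have hKE : K * Real.exp (β * C) ≤ K * Real.exp (2 * C / (q - 1)) * F x := by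
    have h1 : Real.exp (β * C) ≤ Real.exp (2 * C / (q - 1)) * F x := by
      calc Real.exp (β * C) = Real.exp (β * C) * Real.exp (β * C) * Real.exp (-(β * C)) := by
            rw [mul_assoc, ← Real.exp_add]; simp
        _ ≤ Real.exp (β * C) * Real.exp (β * C) * F x := by
            apply mul_le_mul_of_nonneg_left hFxlow (by positivity)
        _ = Real.exp (2 * C / (q - 1)) * F x := by rw [hE]
    calc K * Real.exp (β * C) ≤ K * (Real.exp (2 * C / (q - 1)) * F x) :=
          mul_le_mul_of_nonneg_left h1 hK.le
      _ = K * Real.exp (2 * C / (q - 1)) * F x := by ring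
  -- main integral bound
  have hmain : (∫ u in m..x, F u) ≤
      K * Real.exp (2 * C / (q - 1)) * F x + ((q - 1) / δ) * F x := by
    by_cases hx2 : x ≤ m + K
    · have h1 := hbound1 x hx hx2
      have h2 : 0 ≤ ((q - 1) / δ) * F x := by positivity
      linarith [le_trans h1 hKE]
    · push_neg at hx2
      have hmK : m ≤ m + K := by linarith
      -- continuity of V, F on Ici (m+K)
      have hVcont : ContinuousOn V (Set.Ici (m + K)) := fun u hu =>
        (hder u hu).continuousAt.continuousWithinAt
      have hFcont : ContinuousOn F (Set.Ici (m + K)) :=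
        (Real.continuous_exp.comp_continuousOn (continuousOn_const.mul hVcont))
      have hsub : Set.uIcc (m + K) x ⊆ Set.Ici (m + K) := by
        rw [Set.uIcc_of_le hx2.le]
        exact fun u hu => hu.1
      have hint2 : IntervalIntegrable F volume (m + K) x :=
        (hFcont.mono hsub).intervalIntegrable
      -- FTC on [m+K, x]
      have hderF : ∀ t ∈ Set.uIcc (m + K) x,
          HasDerivAt F (Real.exp (β * V t) * (β * V' t)) t := by
        intro t ht
        exact ((hder t (hsub ht)).const_mul β).exp
      have hgint : IntervalIntegrable (fun t => Real.exp (β * V t) * (β * V' t))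
          volume (m + K) x := by
        apply ContinuousOn.intervalIntegrable
        apply ContinuousOn.mul
        · exact (Real.continuous_exp.comp_continuousOn
            (continuousOn_const.mul (hVcont.mono hsub)))
        · exact continuousOn_const.mul (hcont.mono hsub)
      have hFTC : (∫ t in (m + K)..x, Real.exp (β * V t) * (β * V' t))
          = F x - F (m + K) :=
        intervalIntegral.integral_eq_sub_of_hasDerivAt hderF hgint
      -- comparison
      have hcomp : (β * δ) * (∫ t in (m + K)..x, F t) ≤ F x - F (m + K) := by
        rw [← hFTC, ← intervalIntegral.integral_const_mul]
        apply intervalIntegral.integral_mono_on hx2.le (hint2.const_mul _) hgint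
        intro t ht
        have ht' : t ∈ Set.Ici (m + K) := ht.1
        have h1 : δ ≤ V' t := hV' t ht'
        have h2 : 0 < F t := hFpos t
        have : β * δ * F t ≤ β * V' t * F t := by
          nlinarith [mul_nonneg (mul_nonneg hβ.le (sub_nonneg.mpr h1)) h2.le]
        calc β * δ * F t ≤ β * V' t * F t := this
          _ = Real.exp (β * V t) * (β * V' t) := by rw [hF]; ring
      have hpiece2 : (∫ t in (m + K)..x, F t) ≤ ((q - 1) / δ) * F x := by
        have hβδ : 0 < β * δ := by positivity
        have h1 : (β * δ) * (∫ t in (m + K)..x, F t) ≤ F x := by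
          have := hFpos (m + K); linarith
        have h2 : (∫ t in (m + K)..x, F t) ≤ F x / (β * δ) := by
          rw [le_div_iff₀ hβδ]; linarith [h1]
        have h3 : F x / (β * δ) = ((q - 1) / δ) * F x := by
          rw [hβdef]; field_simp
        linarith [h2, h3.le]
      have hsplit : (∫ u in m..x, F u)
          = (∫ u in m..(m + K), F u) + ∫ u in (m + K)..x, F u :=
        (intervalIntegral.integral_add_adjacent_intervals
          (hint1 (m + K) hmK le_rfl) hint2).symm
      have hpiece1 : (∫ u in m..(m + K), F u) ≤ K * Real.exp (2 * C / (q - 1)) * F x :=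
        le_trans (hbound1 (m + K) hmK le_rfl) hKE
      rw [hsplit]
      linarith
  -- final algebra
  rw [hβdef]; simp only [hFeq]
  set D : ℝ := 1 / δ + (K / (q - 1)) * Real.exp (2 * C / (q - 1)) with hD
  have hDpos : 0 < D := by positivity
  have hDmul : (q - 1) * D * F x
      = K * Real.exp (2 * C / (q - 1)) * F x + ((q - 1) / δ) * F x := by
    rw [hD]; field_simp; ring
  have h1 : (∫ u in m..x, F u) ≤ (q - 1) * D * F x := by rw [hDmul]; exact hmain
  have h2 : (1 / D) * (∫ u in m..x, F u) ≤ (1 / D) * ((q - 1) * D * F x) :=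
    mul_le_mul_of_nonneg_left h1 (by positivity)
  have h3 : (1 / D) * ((q - 1) * D * F x) = (q - 1) * F x := by
    field_simp
  linarith [h2, h3.le]
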